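/- Let G be a graph with maximum degree Δ, let e = rs ∈ E(G), and let φ be a proper Δ-edge-coloring of G − e. If the vertex set V(G) is elementary with respect to φ (no color is missing at two distinct vertices), then n is odd and |E(G)| = Δ·(n−1)/2 + 1; in particular G is overfull. -/

import Mathlib

/-- A proper `k`-edge-coloring: colors are in `[k] = {0, …, k-1}` and edges sharing a
vertex receive distinct colors. -/
def IsProperEdgeColoring {V : Type*} (G : SimpleGraph V) (φ : Sym2 V → ℕ) (k : ℕ) : Prop :=
  (∀ e ∈ G.edgeSet, φ e < k) ∧
  ∀ e ∈ G.edgeSet, ∀ f ∈ G.edgeSet, e ≠ f → (∃ v, v ∈ e ∧ v ∈ f) → φ e ≠ φ f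

/-- The chromatic index `χ'(G)`: least `k` admitting a proper `k`-edge-coloring. -/
noncomputable def chromaticIndex {V : Type*} (G : SimpleGraph V) : ℕ :=
  sInf {k | ∃ φ, IsProperEdgeColoring G φ k}

/-- The set of colors of `[Δ]` missing at `v` under `φ` (w.r.t. the graph `G`). -/
def missing {V : Type*} (G : SimpleGraph V) (φ : Sym2 V → ℕ) (Δ : ℕ) (v : V) : Set ℕ :=
  {c | c < Δ ∧ ∀ e ∈ G.edgeSet, v ∈ e → φ e ≠ c}


/-- If `V(G)` is elementary w.r.t. a proper `Δ`-edge-coloring of `G - rs`, then `n` is odd,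
`|E(G)| = Δ·(n-1)/2 + 1`, and `G` is overfull. -/
theorem elementary_implies_overfull {V : Type*} [Fintype V] [DecidableEq V]
    (G : SimpleGraph V) [DecidableRel G.Adj] (r s : V) (he : G.Adj r s)
    (hclass2 : chromaticIndex G = G.maxDegree + 1)
    (φ : Sym2 V → ℕ)
    (hφ : IsProperEdgeColoring (G.deleteEdges {s(r, s)}) φ G.maxDegree)
    (helem : ∀ u v : V, u ≠ v →
      Disjoint (missing (G.deleteEdges {s(r, s)}) φ G.maxDegree u)
               (missing (G.deleteEdges {s(r, s)}) φ G.maxDegree v)) :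
    Odd (Fintype.card V) ∧
    G.edgeFinset.card = G.maxDegree * ((Fintype.card V - 1) / 2) + 1 ∧
    G.edgeFinset.card > G.maxDegree * (Fintype.card V / 2) := by
  classical
  have hrs : r ≠ s := he.ne
  set n := Fintype.card V with hn
  set Δ := G.maxDegree with hΔdef
  set G' := G.deleteEdges {s(r, s)} with hG'def
  -- covered-pair cardinality helper
  have hpair : ∀ e ∈ G'.edgeSet, (Finset.univ.filter (· ∈ e)).card = 2 := by
    intro e he'
    induction e using Sym2.inductionOn with
    | hf a b =>
      have hab : a ≠ b := ((SimpleGraph.mem_edgeSet _).mp he').ne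
      have h2 : Finset.univ.filter (· ∈ s(a, b)) = {a, b} := by
        ext v; simp [Sym2.mem_iff]
      rw [h2, Finset.card_insert_of_notMem (by simp [hab]), Finset.card_singleton]
  -- color classes and covered vertex sets
  set M : ℕ → Finset (Sym2 V) := fun c => G'.edgeFinset.filter (fun e => φ e = c) with hM
  set S : ℕ → Finset V := fun c => Finset.univ.filter (fun v => ∃ e ∈ M c, v ∈ e) with hS
  have hMsub : ∀ c, ∀ e ∈ M c, e ∈ G'.edgeSet := by
    intro c e heM
    exact SimpleGraph.mem_edgeFinset.mp (Finset.mem_filter.mp heM).1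
  have hScard : ∀ c, (S c).card = 2 * (M c).card := by
    intro c
    have hSeq : S c = (M c).biUnion (fun e => Finset.univ.filter (· ∈ e)) := by
      ext v
      simp only [hS, Finset.mem_filter, Finset.mem_univ, true_and, Finset.mem_biUnion]
    rw [hSeq, Finset.card_biUnion]
    · have hsum := Finset.sum_congr rfl (fun e heM => hpair e (hMsub c e heM))
      rw [hsum, Finset.sum_const, smul_eq_mul, mul_comm]
    · intro e heM f hfM hef
      refine Finset.disjoint_left.mpr ?_
      intro v hv hvf
      simp only [Finset.mem_filter, Finset.mem_univ, true_and] at hv hvf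
      have hce : φ e = c := (Finset.mem_filter.mp heM).2
      have hcf : φ f = c := (Finset.mem_filter.mp hfM).2
      exact hφ.2 e (hMsub c e heM) f (hMsub c f hfM) hef ⟨v, hv, hvf⟩ (hce.trans hcf.symm)
  -- characterization of uncovered vertices via `missing`
  have hmiss : ∀ c v, c < Δ → (v ∉ S c ↔ c ∈ missing G' φ Δ v) := by
    intro c v hc
    constructor
    · intro hv
      refine ⟨hc, ?_⟩
      intro e heE hve hφe
      apply hv
      simp only [hS, Finset.mem_filter, Finset.mem_univ, true_and]
      exact ⟨e, Finset.mem_filter.mpr ⟨SimpleGraph.mem_edgeFinset.mpr heE, hφe⟩, hve⟩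
    · intro hm hv
      simp only [hS, Finset.mem_filter, Finset.mem_univ, true_and] at hv
      obtain ⟨e, heM, hve⟩ := hv
      exact hm.2 e (hMsub c e heM) hve (Finset.mem_filter.mp heM).2
  -- each color is missing at at most one vertex
  have hU1 : ∀ c, c < Δ → (Finset.univ \ S c).card ≤ 1 := by
    intro c hc
    rw [Finset.card_le_one]
    intro u hu v hv
    by_contra huv
    have hu' : u ∉ S c := (Finset.mem_sdiff.mp hu).2
    have hv' : v ∉ S c := (Finset.mem_sdiff.mp hv).2
    exact Set.disjoint_left.mp (helem u v huv) ((hmiss c u hc).mp hu') ((hmiss c v hc).mp hv')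
  -- r misses some color
  have hdegr : 0 < G.degree r := (G.degree_pos_iff_exists_adj r).mpr ⟨s, he⟩
  have hΔpos : 0 < Δ := lt_of_lt_of_le hdegr (G.degree_le_maxDegree r)
  have hnbr : G'.neighborFinset r = G.neighborFinset r \ {s} := by
    ext b
    simp only [SimpleGraph.mem_neighborFinset, hG'def, SimpleGraph.deleteEdges_adj,
      Set.mem_singleton_iff, Finset.mem_sdiff, Finset.mem_singleton]
    constructor
    · rintro ⟨h1, h2⟩
      refine ⟨h1, fun hb => h2 ?_⟩
      rw [hb]
    · rintro ⟨h1, h2⟩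
      refine ⟨h1, fun hb => h2 (Sym2.congr_right.mp hb)⟩
  have hdegG' : G'.degree r = G.degree r - 1 := by
    rw [← SimpleGraph.card_neighborFinset_eq_degree, ← SimpleGraph.card_neighborFinset_eq_degree,
      hnbr, Finset.card_sdiff_of_subset (by simp [SimpleGraph.mem_neighborFinset, he])]
    simp
  have hIcard : (G'.edgeFinset.filter (fun e => r ∈ e)).card < Δ := by
    have : G'.edgeFinset.filter (fun e => r ∈ e) = G'.incidenceFinset r := by
      ext e
      simp [SimpleGraph.mem_incidenceFinset, SimpleGraph.incidenceSet,
        SimpleGraph.mem_edgeFinset, and_comm]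
    rw [this, SimpleGraph.card_incidenceFinset_eq_degree, hdegG']
    have := G.degree_le_maxDegree r
    omega
  obtain ⟨c₀, hc₀⟩ : ∃ c₀, c₀ ∈ Finset.range Δ \ ((G'.edgeFinset.filter (fun e => r ∈ e)).image φ) := by
    apply Finset.card_pos.mp
    rw [Finset.card_sdiff_of_subset]
    · have himg := Finset.card_image_le (s := G'.edgeFinset.filter (fun e => r ∈ e)) (f := φ)
      rw [Finset.card_range]
      omega
    · intro c hc
      obtain ⟨e, heI, rfl⟩ := Finset.mem_image.mp hc
      exact Finset.mem_range.mpr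
        (hφ.1 e (SimpleGraph.mem_edgeFinset.mp (Finset.mem_filter.mp heI).1))
  rw [Finset.mem_sdiff, Finset.mem_range] at hc₀
  obtain ⟨hc₀Δ, hc₀im⟩ := hc₀
  have hrmiss : c₀ ∈ missing G' φ Δ r := by
    refine ⟨hc₀Δ, ?_⟩
    intro e heE hre hφe
    exact hc₀im (Finset.mem_image.mpr ⟨e,
      Finset.mem_filter.mpr ⟨SimpleGraph.mem_edgeFinset.mpr heE, hre⟩, hφe⟩)
  -- uncovered set cardinalities
  have hUcard : ∀ c, (Finset.univ \ S c).card = n - 2 * (M c).card := by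
    intro c
    rw [Finset.card_sdiff_of_subset (Finset.subset_univ _), Finset.card_univ, hScard]
  have hSle : ∀ c, 2 * (M c).card ≤ n := by
    intro c
    rw [← hScard]
    exact le_trans (Finset.card_le_card (Finset.subset_univ _)) (le_of_eq Finset.card_univ)
  -- n = 2 * m₀ + 1
  set m₀ := (M c₀).card with hm₀
  have hr0 : r ∈ Finset.univ \ S c₀ :=
    Finset.mem_sdiff.mpr ⟨Finset.mem_univ r, (hmiss c₀ r hc₀Δ).mpr hrmiss⟩
  have hnodd : n = 2 * m₀ + 1 := by
    have h1 := hU1 c₀ hc₀Δ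
    have h2 := hUcard c₀
    have h3 := hSle c₀
    have h4 : 1 ≤ (Finset.univ \ S c₀).card := Finset.card_pos.mpr ⟨r, hr0⟩
    omega
  -- every color class has exactly m₀ edges
  have hMcard : ∀ c, c < Δ → (M c).card = m₀ := by
    intro c hc
    have h1 := hU1 c hc
    have h2 := hUcard c
    have h3 := hSle c
    omega
  -- edge counts
  have hE' : G'.edgeFinset.card = Δ * m₀ := by
    have := Finset.card_eq_sum_card_fiberwise (s := G'.edgeFinset) (t := Finset.range Δ)
      (f := φ) (fun e heE => Finset.mem_range.mpr (hφ.1 e (SimpleGraph.mem_edgeFinset.mp heE)))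
    rw [this, Finset.sum_congr rfl (fun c hc => hMcard c (Finset.mem_range.mp hc))]
    simp [mul_comm]
  have hers : s(r, s) ∈ G.edgeFinset := SimpleGraph.mem_edgeFinset.mpr he
  have hE'eq : G'.edgeFinset = G.edgeFinset.erase s(r, s) := by
    ext e
    simp only [SimpleGraph.mem_edgeFinset, hG'def, SimpleGraph.edgeSet_deleteEdges,
      Set.mem_diff, Set.mem_singleton_iff, Finset.mem_erase]
    tauto
  have hEG : G.edgeFinset.card = Δ * m₀ + 1 := by
    have h1 : 1 ≤ G.edgeFinset.card := Finset.card_pos.mpr ⟨_, hers⟩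
    have h2 := Finset.card_erase_of_mem hers
    rw [← hE'eq] at h2
    omega
  refine ⟨⟨m₀, by omega⟩, ?_, ?_⟩
  · have : (n - 1) / 2 = m₀ := by omega
    rw [this, hEG]
  · have : n / 2 = m₀ := by omega
    rw [this, hEG]
    omega
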